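/- For any index k = (k_1,...,k_n) of positive integers and any integer N ≥ 1, the alternating binomial transform identity holds: ∑_{i=0}^{N-1} (-1)^i C(N-1, i) s_k(i+1) = s_{k*}(N), where k* is the transpose (dual) index of k. -/

import Mathlib

open Finset

/-- Auxiliary sum: `mhsAux ks N = ∑_{N ≥ m_1 ≥ m_2 ≥ ⋯ ≥ 1} ∏ 1/m_i^{k_i}`. -/
noncomputable def mhsAux : List ℕ → ℕ → ℝ
  | [], _ => 1
  | k :: ks, N => ∑ m ∈ Finset.Icc 1 N, (1 / (m : ℝ) ^ k) * mhsAux ks m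

/-- Finite multiple harmonic sum `s_k(N)` with largest variable fixed equal to `N`. -/
noncomputable def mhs : List ℕ → ℕ → ℝ
  | [], _ => 1
  | k :: ks, N => (1 / (N : ℝ) ^ k) * mhsAux ks N

/-- `A(k) = {k_1, k_1+k_2, …, k_1+⋯+k_{n-1}}`. -/
def indexA (k : List ℕ) : Finset ℕ :=
  (Finset.range (k.length - 1)).image fun i => (k.take (i + 1)).sum

/-- `k'` is the transpose (dual) index of `k`. -/
def IsDualIndex (k k' : List ℕ) : Prop :=
  k' ≠ [] ∧ (∀ a ∈ k', 0 < a) ∧ k'.sum = k.sum ∧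
    indexA k' = Finset.Icc 1 (k.sum - 1) \ indexA k

/- ## Words -/

noncomputable def ev : List Bool → ℕ → ℝ
  | [], N => 1 / N
  | false :: w, N => (1 / N) * ev w N
  | true :: w, N => (1 / N) * ∑ m ∈ Finset.Icc 1 N, ev w m

def toWord : List ℕ → List Bool
  | [] => []
  | [a] => List.replicate (a - 1) false
  | a :: ks => List.replicate (a - 1) false ++ true :: toWord ks

@[simp] lemma ev_nil (N : ℕ) : ev [] N = 1 / N := rfl
@[simp] lemma ev_false (w : List Bool) (N : ℕ) : ev (false :: w) N = (1 / N) * ev w N := rfl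
@[simp] lemma ev_true (w : List Bool) (N : ℕ) :
    ev (true :: w) N = (1 / N) * ∑ m ∈ Finset.Icc 1 N, ev w m := rfl

lemma ev_replicate (m : ℕ) (w : List Bool) (N : ℕ) :
    ev (List.replicate m false ++ w) N = (1 / N) ^ m * ev w N := by
  induction m with
  | zero => simp
  | succ m ih =>
    rw [List.replicate_succ, List.cons_append, ev_false, ih, pow_succ]
    ring

lemma mhs_eq_ev (k : List ℕ) (hk : k ≠ []) (hpos : ∀ a ∈ k, 0 < a) (N : ℕ) :
    mhs k N = ev (toWord k) N := by
  induction k generalizing N with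
  | nil => exact absurd rfl hk
  | cons a ks ih =>
    have ha : 0 < a := hpos a (List.mem_cons_self)
    match ks with
    | [] =>
      show (1 / (N:ℝ) ^ a) * 1 = ev (toWord [a]) N
      have : toWord [a] = List.replicate (a - 1) false := rfl
      rw [this, ← List.append_nil (List.replicate (a-1) false), ev_replicate, ev_nil]
      rw [mul_one, ← one_div_pow, ← pow_succ]
      congr 1
      omega
    | b :: ks' =>
      have h1 : toWord (a :: b :: ks') = List.replicate (a - 1) false ++ true :: toWord (b :: ks') := rfl
      rw [h1, ev_replicate, ev_true]
      have h2 : ∀ m : ℕ, ev (toWord (b :: ks')) m = mhs (b :: ks') m := by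
        intro m
        exact (ih (by simp) (fun x hx => hpos x (List.mem_cons_of_mem a hx)) m).symm
      rw [Finset.sum_congr rfl (fun m _ => h2 m)]
      show (1 / (N:ℝ) ^ a) * mhsAux (b :: ks') N = _
      have h3 : mhsAux (b :: ks') N = ∑ m ∈ Finset.Icc 1 N, mhs (b :: ks') m := rfl
      rw [h3, ← mul_assoc, ← one_div_pow, ← pow_succ]
      congr 2
      omega

/- ## The binomial transform -/

noncomputable def T (f : ℕ → ℝ) (N : ℕ) : ℝ :=
  ∑ i ∈ Finset.range N, (-1 : ℝ) ^ i * ((N - 1).choose i) * f (i + 1)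

lemma head_alt (n t : ℕ) :
    ∑ i ∈ Finset.range t, (-1 : ℝ) ^ i * ((n + 1).choose (i + 1)) =
      1 - (-1) ^ t * (n.choose t) := by
  induction t with
  | zero => simp
  | succ t ih =>
    rw [Finset.sum_range_succ, ih]
    have h : (((n + 1).choose (t + 1) : ℕ) : ℝ) = (n.choose t : ℝ) + (n.choose (t + 1) : ℝ) := by
      rw [Nat.choose_succ_succ]; push_cast; ring
    rw [h]; ring

lemma sum_alt_shift (n : ℕ) :
    ∑ i ∈ Finset.range (n + 1), (-1 : ℝ) ^ i * ((n + 1).choose (i + 1)) = 1 := by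
  rw [head_alt, Nat.choose_eq_zero_of_lt (by omega)]
  simp

lemma tail_alt (n j : ℕ) (hj : 1 ≤ j) (hjn : j ≤ n + 1) :
    ∑ i ∈ Finset.Icc (j - 1) n, (-1 : ℝ) ^ i * ((n + 1).choose (i + 1)) =
      (-1) ^ (j - 1) * (n.choose (j - 1)) := by
  have hsplit : ∑ i ∈ Finset.range (j - 1), (-1 : ℝ) ^ i * ((n + 1).choose (i + 1))
      + ∑ i ∈ Finset.Icc (j - 1) n, (-1 : ℝ) ^ i * ((n + 1).choose (i + 1))
      = ∑ i ∈ Finset.range (n + 1), (-1 : ℝ) ^ i * ((n + 1).choose (i + 1)) := by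
    rw [Finset.range_eq_Ico, Finset.range_eq_Ico,
      show Finset.Icc (j - 1) n = Finset.Ico (j - 1) (n + 1) by rw [Finset.Ico_add_one_right_eq_Icc]]
    exact Finset.sum_Ico_consecutive _ (by omega) (by omega)
  rw [sum_alt_shift, head_alt] at hsplit
  linarith [hsplit]

lemma key_choose (n i : ℕ) :
    ((n.choose i : ℕ) : ℝ) * (1 / (i + 1)) = ((n + 1).choose (i + 1) : ℕ) * (1 / (n + 1)) := by
  have h := Nat.add_one_mul_choose_eq n i
  have h' : ((n : ℝ) + 1) * (n.choose i : ℝ) = ((n + 1).choose (i + 1) : ℝ) * ((i : ℝ) + 1) := by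
    exact_mod_cast h
  have hi : ((i : ℝ) + 1) ≠ 0 := by positivity
  have hn : ((n : ℝ) + 1) ≠ 0 := by positivity
  field_simp
  linear_combination h'

lemma hockey_cast (N i : ℕ) :
    ∑ m ∈ Finset.Icc 1 N, (((m - 1).choose i : ℕ) : ℝ) = ((N.choose (i + 1) : ℕ) : ℝ) := by
  have : ∑ m ∈ Finset.Icc 1 N, ((m - 1).choose i) = N.choose (i + 1) := by
    induction N with
    | zero => simp
    | succ N ih =>
      rw [Finset.sum_Icc_succ_top (by omega), ih, Nat.succ_sub_one, Nat.choose_succ_succ']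
      omega
  exact_mod_cast this

lemma T_one (n : ℕ) : T (fun m => 1 / (m : ℝ)) (n + 1) = 1 / (n + 1) := by
  unfold T
  have : ∀ i ∈ Finset.range (n + 1),
      (-1 : ℝ) ^ i * (((n + 1 - 1).choose i : ℕ) : ℝ) * (1 / ((i + 1 : ℕ) : ℝ))
        = (1 / ((n : ℝ) + 1)) * ((-1 : ℝ) ^ i * ((n + 1).choose (i + 1))) := by
    intro i _
    rw [Nat.add_sub_cancel, mul_assoc]
    push_cast
    rw [key_choose]
    ring
  rw [Finset.sum_congr rfl this, ← Finset.mul_sum, sum_alt_shift]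
  rw [mul_one]

lemma T_x (f : ℕ → ℝ) (n : ℕ) :
    T (fun m => (1 / (m : ℝ)) * f m) (n + 1)
      = (1 / ((n : ℝ) + 1)) * ∑ m ∈ Finset.Icc 1 (n + 1), T f m := by
  have hext : ∀ m ∈ Finset.Icc 1 (n + 1),
      T f m = ∑ i ∈ Finset.range (n + 1), (-1 : ℝ) ^ i * ((m - 1).choose i) * f (i + 1) := by
    intro m hm
    rw [Finset.mem_Icc] at hm
    exact Finset.sum_subset (Finset.range_subset_range.2 hm.2) (fun i hi hni => by
      rw [Nat.choose_eq_zero_of_lt (by simp [Finset.mem_range] at hi hni ⊢; omega)]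
      simp)
  rw [Finset.sum_congr rfl hext, Finset.sum_comm]
  have hinner : ∀ i ∈ Finset.range (n + 1),
      ∑ m ∈ Finset.Icc 1 (n + 1), (-1 : ℝ) ^ i * ((m - 1).choose i) * f (i + 1)
        = (-1 : ℝ) ^ i * ((n + 1).choose (i + 1)) * f (i + 1) := by
    intro i _
    rw [← Finset.sum_mul, ← Finset.mul_sum, hockey_cast]
  rw [Finset.sum_congr rfl hinner]
  unfold T
  rw [Finset.mul_sum]
  refine Finset.sum_congr rfl fun i _ => ?_
  rw [Nat.add_sub_cancel]
  have hk := key_choose n i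
  push_cast at hk ⊢
  linear_combination ((-1:ℝ)^i * f (i+1)) * hk

lemma T_y (f : ℕ → ℝ) (n : ℕ) :
    T (fun m => (1 / (m : ℝ)) * ∑ j ∈ Finset.Icc 1 m, f j) (n + 1)
      = (1 / ((n : ℝ) + 1)) * T f (n + 1) := by
  unfold T
  have step1 : ∀ i ∈ Finset.range (n + 1),
      (-1 : ℝ) ^ i * (((n + 1 - 1).choose i : ℕ) : ℝ)
          * ((1 / ((i + 1 : ℕ) : ℝ)) * ∑ j ∈ Finset.Icc 1 (i + 1), f j)
        = (1 / ((n : ℝ) + 1)) * ((-1 : ℝ) ^ i * ((n + 1).choose (i + 1))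
          * ∑ j ∈ Finset.Icc 1 (n + 1), (if j ≤ i + 1 then f j else 0)) := by
    intro i hi
    rw [Finset.mem_range] at hi
    have hsub : ∑ j ∈ Finset.Icc 1 (i + 1), f j
        = ∑ j ∈ Finset.Icc 1 (n + 1), (if j ≤ i + 1 then f j else 0) := by
      rw [← Finset.sum_filter]
      congr 1
      ext j
      simp only [Finset.mem_filter, Finset.mem_Icc]
      omega
    rw [hsub]
    have hk := key_choose n i
    rw [Nat.add_sub_cancel]
    push_cast at hk ⊢
    linear_combination ((-1:ℝ)^i * ∑ j ∈ Finset.Icc 1 (n+1), (if j ≤ i + 1 then f j else 0)) * hk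
  rw [Finset.sum_congr rfl step1, ← Finset.mul_sum]
  congr 1
  have swap : ∑ i ∈ Finset.range (n + 1), ((-1 : ℝ) ^ i * ((n + 1).choose (i + 1))
        * ∑ j ∈ Finset.Icc 1 (n + 1), (if j ≤ i + 1 then f j else 0))
      = ∑ j ∈ Finset.Icc 1 (n + 1),
          ∑ i ∈ Finset.range (n + 1), (if j ≤ i + 1 then (-1 : ℝ) ^ i * ((n + 1).choose (i + 1)) * f j else 0) := by
    rw [Finset.sum_comm]
    refine Finset.sum_congr rfl fun i _ => ?_
    rw [Finset.mul_sum]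
    refine Finset.sum_congr rfl fun j _ => ?_
    split <;> simp
  rw [swap]
  have inner : ∀ j ∈ Finset.Icc 1 (n + 1),
      ∑ i ∈ Finset.range (n + 1), (if j ≤ i + 1 then (-1 : ℝ) ^ i * ((n + 1).choose (i + 1)) * f j else 0)
        = (-1 : ℝ) ^ (j - 1) * ((n.choose (j - 1) : ℕ) : ℝ) * f j := by
    intro j hj
    rw [Finset.mem_Icc] at hj
    rw [← Finset.sum_filter]
    have hfil : (Finset.range (n + 1)).filter (fun i => j ≤ i + 1) = Finset.Icc (j - 1) n := by
      ext i
      simp [Finset.mem_filter, Finset.mem_Icc, Finset.mem_range]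
      omega
    rw [hfil, ← Finset.sum_mul, tail_alt n j hj.1 hj.2]
  rw [Finset.sum_congr rfl inner]
  rw [show Finset.Icc 1 (n + 1) = Finset.Ico 1 (n + 2) by rw [← Finset.Ico_add_one_right_eq_Icc]; rfl,
    Finset.sum_Ico_eq_sum_range]
  simp only [Nat.add_sub_cancel_left, Nat.add_sub_cancel]
  exact Finset.sum_congr rfl fun i _ => by rw [add_comm 1 i]

lemma T_ev (w : List Bool) : ∀ n : ℕ, T (ev w) (n + 1) = ev (w.map not) (n + 1) := by
  induction w with
  | nil =>
    intro n
    have h : ev [] = fun m : ℕ => 1 / (m : ℝ) := by funext m; rfl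
    rw [h]
    simpa using T_one n
  | cons b w ih =>
    intro n
    cases b with
    | false =>
      have h : ev (false :: w) = fun m : ℕ => (1 / (m : ℝ)) * ev w m := by funext m; rfl
      rw [h, T_x]
      have h2 : ∀ m ∈ Finset.Icc 1 (n + 1), T (ev w) m = ev (w.map not) m := by
        intro m hm
        rw [Finset.mem_Icc] at hm
        obtain ⟨m', rfl⟩ : ∃ m', m = m' + 1 := ⟨m - 1, by omega⟩
        exact ih m'
      rw [Finset.sum_congr rfl h2]
      show _ = ev (true :: w.map not) (n + 1)
      rw [ev_true]
      push_cast
      ring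
    | true =>
      have h : ev (true :: w) = fun m : ℕ => (1 / (m : ℝ)) * ∑ j ∈ Finset.Icc 1 m, ev w j := by
        funext m; rfl
      rw [h, T_y, ih n]
      show _ = ev (false :: w.map not) (n + 1)
      rw [ev_false]
      push_cast
      ring

/- ## Words and index sets -/

lemma getD_replicate_false (m p : ℕ) : (List.replicate m false).getD p false = false := by
  induction m generalizing p with
  | zero => rfl
  | succ m ih =>
    cases p with
    | zero => rfl
    | succ p => rw [List.replicate_succ, List.getD_cons_succ, ih]

@[simp] lemma indexA_single (a : ℕ) : indexA [a] = ∅ := by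
  simp [indexA]

lemma mem_indexA_cons (a b : ℕ) (ks : List ℕ) (x : ℕ) :
    x ∈ indexA (a :: b :: ks) ↔ x = a ∨ ∃ y ∈ indexA (b :: ks), x = a + y := by
  simp only [indexA, Finset.mem_image, Finset.mem_range, List.length_cons]
  constructor
  · rintro ⟨i, hi, rfl⟩
    cases i with
    | zero => left; simp
    | succ j =>
      right
      refine ⟨(List.take (j + 1) (b :: ks)).sum, ⟨j, by simpa using by omega, rfl⟩, ?_⟩
      rw [List.take_succ_cons, List.sum_cons]
  · rintro (rfl | ⟨y, ⟨j, hj, rfl⟩, rfl⟩)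
    · exact ⟨0, by omega, by simp⟩
    · refine ⟨j + 1, by omega, ?_⟩
      rw [List.take_succ_cons, List.sum_cons]

lemma indexA_head_le (b : ℕ) (ks : List ℕ) : ∀ x ∈ indexA (b :: ks), b ≤ x := by
  simp only [indexA, Finset.mem_image, Finset.mem_range]
  rintro x ⟨i, hi, rfl⟩
  rw [List.take_succ_cons, List.sum_cons]
  omega

lemma toWord_length (k : List ℕ) (hk : k ≠ []) (hpos : ∀ a ∈ k, 0 < a) :
    (toWord k).length = k.sum - 1 := by
  induction k with
  | nil => exact absurd rfl hk
  | cons a ks ih =>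
    have ha : 0 < a := hpos a (List.mem_cons_self)
    match ks with
    | [] => simp [toWord]
    | b :: ks' =>
      have hb : 0 < b := hpos b (by simp)
      have h1 := ih (by simp) (fun x hx => hpos x (List.mem_cons_of_mem a hx))
      show (List.replicate (a - 1) false ++ true :: toWord (b :: ks')).length = _
      have hs : (b :: ks').sum = b + ks'.sum := rfl
      simp only [List.length_append, List.length_replicate, List.length_cons, h1,
        List.sum_cons]
      omega

lemma toWord_true_iff (k : List ℕ) (hk : k ≠ []) (hpos : ∀ a ∈ k, 0 < a) (p : ℕ) :
    (toWord k).getD p false = true ↔ (p + 1) ∈ indexA k := by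
  induction k generalizing p with
  | nil => exact absurd rfl hk
  | cons a ks ih =>
    have ha : 0 < a := hpos a (List.mem_cons_self)
    match ks with
    | [] =>
      rw [show toWord [a] = List.replicate (a - 1) false from rfl, getD_replicate_false]
      simp
    | b :: ks' =>
      have hb : 0 < b := hpos b (by simp)
      rw [show toWord (a :: b :: ks')
          = List.replicate (a - 1) false ++ true :: toWord (b :: ks') from rfl,
        mem_indexA_cons]
      by_cases hp : p < a - 1
      · rw [List.getD_append _ _ _ _ (by simpa using hp), getD_replicate_false]
        refine iff_of_false (by simp) ?_
        rintro (h | ⟨y, hy, h⟩)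
        · omega
        · have := indexA_head_le b ks' y hy; omega
      · rw [List.getD_append_right _ _ _ _ (by simpa using by omega)]
        by_cases hpa : p = a - 1
        · refine iff_of_true ?_ (Or.inl (by omega))
          rw [show p - (List.replicate (a - 1) (false : Bool)).length = 0 by simp; omega]
          rfl
        · rw [show p - (List.replicate (a - 1) (false : Bool)).length = (p - a) + 1 by
            simp; omega, List.getD_cons_succ]
          rw [ih (by simp) (fun x hx => hpos x (List.mem_cons_of_mem a hx)) (p - a)]
          constructor
          · intro h
            exact Or.inr ⟨p - a + 1, h, by omega⟩
          · rintro (h | ⟨y, hy, h⟩)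
            · omega
            · have h2 : p - a + 1 = y := by omega
              rwa [h2]

theorem duality_of_finite_multiple_harmonic_sums
    (k k' : List ℕ) (hk : k ≠ []) (hpos : ∀ a ∈ k, 0 < a)
    (hdual : IsDualIndex k k') (N : ℕ) (hN : 1 ≤ N) :
    ∑ i ∈ Finset.range N, (-1 : ℝ) ^ i * (N - 1).choose i * mhs k (i + 1)
      = mhs k' N := by
  obtain ⟨hk'ne, hk'pos, hsum, hA⟩ := hdual
  have hlen' : (toWord k').length = k.sum - 1 := by
    rw [toWord_length k' hk'ne hk'pos, hsum]
  have hlen : (toWord k).length = k.sum - 1 := toWord_length k hk hpos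
  have hw : toWord k' = (toWord k).map not := by
    apply List.ext_getElem (by rw [List.length_map, hlen', hlen])
    intro p hp1 hp2
    rw [List.getElem_map]
    have hplt : p < k.sum - 1 := by rwa [hlen'] at hp1
    have hpk : p < (toWord k).length := by rw [hlen]; exact hplt
    have h1 : ((toWord k')[p] = true) ↔ (p + 1) ∈ indexA k' := by
      rw [← List.getD_eq_getElem _ false hp1]
      exact toWord_true_iff k' hk'ne hk'pos p
    have h2 : ((toWord k)[p]'hpk = true) ↔ (p + 1) ∈ indexA k := by
      rw [← List.getD_eq_getElem _ false hpk]
      exact toWord_true_iff k hk hpos p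
    have hmemiff : (p + 1) ∈ indexA k' ↔ (p + 1) ∉ indexA k := by
      rw [hA, Finset.mem_sdiff, Finset.mem_Icc]
      constructor
      · rintro ⟨_, h⟩; exact h
      · intro h; exact ⟨⟨by omega, by omega⟩, h⟩
    have hiff : ((toWord k')[p] = true) ↔ ¬ ((toWord k)[p]'hpk = true) :=
      h1.trans (hmemiff.trans (not_congr h2.symm))
    rw [Bool.eq_not_iff]
    intro hEq
    rw [hEq] at hiff
    exact iff_not_self hiff
  obtain ⟨n, rfl⟩ : ∃ n, N = n + 1 := ⟨N - 1, by omega⟩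
  have step1 : ∑ i ∈ Finset.range (n + 1),
      (-1 : ℝ) ^ i * ((n + 1 - 1).choose i) * mhs k (i + 1) = T (ev (toWord k)) (n + 1) := by
    unfold T
    exact Finset.sum_congr rfl fun i _ => by rw [mhs_eq_ev k hk hpos]
  rw [step1, T_ev, ← hw, ← mhs_eq_ev k' hk'ne hk'pos]
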